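/- Let m ≥ 1 be an integer and let H be a subharmonic real-valued homogeneous polynomial of degree 2m containing no harmonic terms with ‖H‖ = 1. Let η_n ∈ M_H with η_n → (0,0) and |η_{n,1}|^{2m}/ε(η_n) → 0 as n → ∞. Then for all integers j, q ≥ 1 with j+q < 2m, the coefficients H_{j,q̄}(η_{n,1}) τ(η_n)^{j+q}/(j! q! ε(η_n)) tend to 0. Consequently, if for all j, q ≥ 1 with j+q ≤ 2m the coefficients H_{j,q̄}(η_{n,1}) τ(η_n)^{j+q}/(j! q! ε(η_n)) converge to complex numbers c_{j,q}, then c_{j,q} = 0 for j+q < 2m and c_{j,q} = a_{2m−j} for j+q = 2m; that is, the limit polynomial H_∞(w) = Σ c_{j,q} w^j conj(w)^q equals H. -/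

import Mathlib

open Complex Finset Metric Filter Topology Asymptotics
open scoped ENNReal NNReal

noncomputable section

/-- `Hpoly m a z = Σ_{j=1}^{2m-1} a_{2m-j} z^j conj(z)^{2m-j}`. -/
def Hpoly (m : ℕ) (a : ℕ → ℂ) (z : ℂ) : ℂ :=
  ∑ j ∈ Finset.Icc 1 (2 * m - 1), a (2 * m - j) * z ^ j * (starRingEnd ℂ z) ^ (2 * m - j)

/-- The coefficients `a` give a real-valued polynomial that is not identically zero. -/
def GoodCoeff (m : ℕ) (a : ℕ → ℂ) : Prop :=
  (∀ j ∈ Finset.Icc 1 (2 * m - 1), a j = starRingEnd ℂ (a (2 * m - j))) ∧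
  (∃ j ∈ Finset.Icc 1 (2 * m - 1), a j ≠ 0)

/-- Subharmonicity: the Laplacian is a nonnegative real number at every point. -/
def SubharmonicCoeff (m : ℕ) (a : ℕ → ℂ) : Prop :=
  ∀ z : ℂ,
    ((4 : ℂ) * ∑ j ∈ Finset.Icc 1 (2 * m - 1),
      (j : ℂ) * ((2 * m - j : ℕ) : ℂ) * a (2 * m - j) * z ^ (j - 1) *
        (starRingEnd ℂ z) ^ (2 * m - j - 1)).im = 0 ∧
    0 ≤ ((4 : ℂ) * ∑ j ∈ Finset.Icc 1 (2 * m - 1),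
      (j : ℂ) * ((2 * m - j : ℕ) : ℂ) * a (2 * m - j) * z ^ (j - 1) *
        (starRingEnd ℂ z) ^ (2 * m - j - 1)).re

/-- The model domain `M_H`. -/
def modelM (H : ℂ → ℝ) : Set (ℂ × ℂ) := {z : ℂ × ℂ | z.2.re + H z.1 < 0}

/-- The tube domain `Ω_m`. -/
def OmegaM (m : ℕ) : Set (ℂ × ℂ) := {z : ℂ × ℂ | z.2.re + z.1.re ^ (2 * m) < 0}

/-- `f` is a biholomorphism from `Ω₁` onto `Ω₂`. -/
def IsBiholoOn (Ω₁ Ω₂ : Set (ℂ × ℂ)) (f : ℂ × ℂ → ℂ × ℂ) : Prop :=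
  DifferentiableOn ℂ f Ω₁ ∧ Set.MapsTo f Ω₁ Ω₂ ∧
    ∃ g : ℂ × ℂ → ℂ × ℂ, DifferentiableOn ℂ g Ω₂ ∧ Set.MapsTo g Ω₂ Ω₁ ∧
      (∀ z ∈ Ω₁, g (f z) = z) ∧ (∀ w ∈ Ω₂, f (g w) = w)

/-- `f` is an automorphism of `Ω`. -/
def IsAutomorphismOf (Ω : Set (ℂ × ℂ)) (f : ℂ × ℂ → ℂ × ℂ) : Prop :=
  IsBiholoOn Ω Ω f

/-- Mixed Wirtinger derivative `H_{j,q̄}`. -/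
def Hmix (m : ℕ) (a : ℕ → ℂ) (j q : ℕ) (z : ℂ) : ℂ :=
  ∑ k ∈ (Finset.Icc j (2 * m - 1)).filter (fun k => q ≤ 2 * m - k),
    a (2 * m - k) * (k.descFactorial j : ℂ) * ((2 * m - k).descFactorial q : ℂ) *
      z ^ (k - j) * (starRingEnd ℂ z) ^ (2 * m - k - q)

/-- Holomorphic Wirtinger derivative `H_j`. -/
def Hhol (m : ℕ) (a : ℕ → ℂ) (j : ℕ) (z : ℂ) : ℂ :=
  ∑ k ∈ Finset.Icc j (2 * m - 1),
    a (2 * m - k) * (k.descFactorial j : ℂ) * z ^ (k - j) * (starRingEnd ℂ z) ^ (2 * m - k)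

/-- `ε(a) = |Re a₂ + H(a₁)|`. -/
def epsAt (H : ℂ → ℝ) (p : ℂ × ℂ) : ℝ := |p.2.re + H p.1|

/-- The `(j,q)` coefficient of the rescaled polynomial `H_{a,τ}`. -/
def scaledCoeff (m : ℕ) (a : ℕ → ℂ) (H : ℂ → ℝ) (p : ℂ × ℂ) (τ : ℝ) (j q : ℕ) : ℂ :=
  Hmix m a j q p.1 * (τ : ℂ) ^ (j + q) /
    ((j.factorial : ℂ) * (q.factorial : ℂ) * (epsAt H p : ℂ))

/-- Index pairs `(j,q)` with `j, q ≥ 1` and `j + q ≤ 2m`. -/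
def coeffPairs (m : ℕ) : Finset (ℕ × ℕ) :=
  (Finset.Icc 1 (2 * m) ×ˢ Finset.Icc 1 (2 * m)).filter (fun jq => jq.1 + jq.2 ≤ 2 * m)

/-- `‖H_{a,τ}‖`, the maximum modulus of the coefficients of the rescaled polynomial. -/
def HscaledNorm (m : ℕ) (a : ℕ → ℂ) (H : ℂ → ℝ) (p : ℂ × ℂ) (τ : ℝ) : ℝ :=
  (((coeffPairs m).sup fun jq =>
    Real.toNNReal (‖scaledCoeff m a H p τ jq.1 jq.2‖)) : ℝ≥0)

/-- Vanishing order at `0 ∈ ℂ` of a map, via big-O estimates. -/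
def vOrder {E : Type*} [NormedAddCommGroup E] (u : ℂ → E) : ℝ≥0∞ :=
  sSup {c : ℝ≥0∞ | ∃ k : ℕ, c = (k : ℝ≥0∞) ∧ u =O[𝓝 (0 : ℂ)] fun z : ℂ => ‖z‖ ^ k}

/-- The D'Angelo type of `∂M_H` at `p`. -/
def dAngeloType (H : ℂ → ℝ) (p : ℂ × ℂ) : ℝ≥0∞ :=
  ⨆ (γ : ℂ → ℂ × ℂ) (_ : ∃ r > 0, DifferentiableOn ℂ γ (Metric.ball 0 r) ∧
      γ 0 = p ∧ ¬ ∀ z ∈ Metric.ball (0 : ℂ) r, γ z = p),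
    vOrder (fun t => ((γ t).2.re + H (γ t).1 : ℝ)) / vOrder (fun t => γ t - p)


lemma aux_pow_root (f : ℕ → ℝ) (k : ℕ) (hk : k ≠ 0) (hf : ∀ n, 0 ≤ f n)
    (h : Filter.Tendsto (fun n => f n ^ k) Filter.atTop (𝓝 0)) :
    Filter.Tendsto f Filter.atTop (𝓝 0) := by
  have hk0 : (0:ℝ) < (k:ℝ) := by exact_mod_cast Nat.pos_of_ne_zero hk
  have hkpos : (0:ℝ) < (k:ℝ)⁻¹ := by positivity
  have hcont : ContinuousAt (fun x : ℝ => x ^ ((k:ℝ)⁻¹)) 0 :=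
    Real.continuousAt_rpow_const 0 _ (Or.inr hkpos.le)
  have h2 := hcont.tendsto.comp h
  rw [Real.zero_rpow (ne_of_gt hkpos)] at h2
  refine h2.congr fun n => ?_
  show (f n ^ k) ^ ((k:ℝ)⁻¹) = f n
  rw [← Real.rpow_natCast (f n) k, ← Real.rpow_mul (hf n), mul_inv_cancel₀ hk0.ne',
    Real.rpow_one]

lemma aux_ineq (C X T E : ℝ) (hC : 0 ≤ C) (hX : 0 ≤ X) (hT : 0 ≤ T) (hE : 0 < E)
    (s e N : ℕ) (hse : s + e = N) (hTE : T ^ N ≤ E) :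
    (C * X ^ e * T ^ s / E) ^ N ≤ C ^ N * (X ^ N / E) ^ e := by
  have hEN : E ^ N = E ^ s * E ^ e := by rw [← pow_add, hse]
  have h1 : (T ^ s) ^ N = (T ^ N) ^ s := by
    rw [← pow_mul, ← pow_mul, Nat.mul_comm]
  calc (C * X ^ e * T ^ s / E) ^ N
      = C ^ N * (X ^ e) ^ N * (T ^ N) ^ s / E ^ N := by
        rw [div_pow, mul_pow, mul_pow, h1]
    _ ≤ C ^ N * (X ^ e) ^ N * E ^ s / E ^ N := by
        gcongr
    _ = C ^ N * (X ^ N / E) ^ e := by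
        have h2 : (X ^ e) ^ N = (X ^ N) ^ e := by
          rw [← pow_mul, ← pow_mul, Nat.mul_comm]
        rw [hEN, h2, div_pow]
        field_simp

lemma topCoeff (m : ℕ) (a : ℕ → ℂ) (H : ℂ → ℝ) (p : ℂ × ℂ) (τ : ℝ)
    (hε : epsAt H p ≠ 0) (j q : ℕ) (h1 : 1 ≤ j) (h2 : 1 ≤ q) (hs : j + q = 2 * m) :
    scaledCoeff m a H p τ j q
      = a (2 * m - j) * ((τ : ℂ) ^ (2 * m) / ((epsAt H p : ℝ) : ℂ)) := by
  have hq : q = 2 * m - j := by omega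
  subst hq
  unfold scaledCoeff Hmix
  have hset : (Finset.Icc j (2*m-1)).filter (fun k => 2*m - j ≤ 2*m - k) = {j} := by
    ext k
    simp only [Finset.mem_filter, Finset.mem_Icc, Finset.mem_singleton]
    omega
  rw [hset, Finset.sum_singleton]
  have h3 : j + (2*m - j) = 2*m := by omega
  rw [h3]
  simp only [Nat.descFactorial_self, Nat.sub_self, pow_zero, mul_one]
  have hεC : ((epsAt H p : ℝ) : ℂ) ≠ 0 := Complex.ofReal_ne_zero.mpr hε
  have hjf : (j.factorial : ℂ) ≠ 0 := Nat.cast_ne_zero.mpr (Nat.factorial_ne_zero _)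
  have hqf : ((2*m - j).factorial : ℂ) ≠ 0 := Nat.cast_ne_zero.mpr (Nat.factorial_ne_zero _)
  field_simp

lemma Hmix_bound (m : ℕ) (a : ℕ → ℂ)
    (ha : ∀ k, 1 ≤ k → k ≤ 2*m-1 → ‖a k‖ ≤ 1)
    (j q : ℕ) (hj : 1 ≤ j) (w : ℂ) :
    ‖Hmix m a j q w‖
      ≤ (∑ k ∈ (Finset.Icc j (2*m-1)).filter (fun k => q ≤ 2*m - k),
          ((k.descFactorial j : ℝ) * ((2*m-k).descFactorial q : ℝ)))
        * ‖w‖ ^ (2*m - j - q) := by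
  unfold Hmix
  refine le_trans (norm_sum_le _ _) ?_
  rw [Finset.sum_mul]
  refine Finset.sum_le_sum fun k hk => ?_
  simp only [Finset.mem_filter, Finset.mem_Icc] at hk
  rw [norm_mul, norm_mul, norm_mul, norm_mul, norm_pow, norm_pow,
    Complex.norm_natCast, Complex.norm_natCast, Complex.norm_conj]
  have he : ‖w‖ ^ (k - j) * ‖w‖ ^ (2*m - k - q)
      = ‖w‖ ^ (2*m - j - q) := by
    rw [← pow_add]; congr 1; omega
  have hak : ‖a (2*m - k)‖ ≤ 1 := ha _ (by omega) (by omega)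
  calc ‖a (2*m-k)‖ * (k.descFactorial j : ℝ) * ((2*m-k).descFactorial q : ℝ)
        * ‖w‖ ^ (k-j) * ‖w‖ ^ (2*m-k-q)
      = ‖a (2*m-k)‖ * ((k.descFactorial j : ℝ) * ((2*m-k).descFactorial q : ℝ)
        * ‖w‖ ^ (2*m-j-q)) := by rw [← he]; ring
    _ ≤ 1 * ((k.descFactorial j : ℝ) * ((2*m-k).descFactorial q : ℝ)
        * ‖w‖ ^ (2*m-j-q)) := by
        apply mul_le_mul_of_nonneg_right hak; positivity
    _ = _ := by ring


/-- along a sequence converging tangentially to order `< 2m`, the rescaled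
coefficients of total degree `< 2m` tend to `0`, and the limit polynomial is `H` itself. -/
theorem statement_16 (m : ℕ) (hm : 1 ≤ m) (a : ℕ → ℂ) (H : ℂ → ℝ)
    (hH : ∀ z : ℂ, (H z : ℂ) = Hpoly m a z)
    (hgood : GoodCoeff m a) (hsub : SubharmonicCoeff m a)
    (hnorm : (((Finset.Icc 1 (2 * m - 1)).sup fun j =>
      Real.toNNReal (‖a j‖)) : ℝ≥0) = 1)
    (η : ℕ → ℂ × ℂ) (hη : ∀ n, η n ∈ modelM H)
    (hηlim : Filter.Tendsto η Filter.atTop (𝓝 ((0 : ℂ), (0 : ℂ))))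
    (hratio : Filter.Tendsto (fun n => ‖(η n).1‖ ^ (2 * m) / epsAt H (η n))
      Filter.atTop (𝓝 0))
    (τn : ℕ → ℝ) (hτ : ∀ n, 0 < τn n ∧ HscaledNorm m a H (η n) (τn n) = 1) :
    (∀ j q : ℕ, 1 ≤ j → 1 ≤ q → j + q < 2 * m →
      Filter.Tendsto (fun n => scaledCoeff m a H (η n) (τn n) j q)
        Filter.atTop (𝓝 0)) ∧
    (∀ cc : ℕ → ℕ → ℂ,
      (∀ j q : ℕ, 1 ≤ j → 1 ≤ q → j + q ≤ 2 * m →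
        Filter.Tendsto (fun n => scaledCoeff m a H (η n) (τn n) j q)
          Filter.atTop (𝓝 (cc j q))) →
      (∀ j q : ℕ, 1 ≤ j → 1 ≤ q → j + q < 2 * m → cc j q = 0) ∧
      (∀ j q : ℕ, 1 ≤ j → 1 ≤ q → j + q = 2 * m → cc j q = a (2 * m - j)) ∧
      (∀ w : ℂ, (∑ jq ∈ coeffPairs m,
        cc jq.1 jq.2 * w ^ jq.1 * (starRingEnd ℂ w) ^ jq.2) = Hpoly m a w)) := by
  classical
  have hεpos : ∀ n, 0 < epsAt H (η n) := by
    intro n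
    have h := hη n
    simp only [modelM, Set.mem_setOf_eq] at h
    unfold epsAt
    exact abs_pos.mpr (ne_of_lt h)
  have ha_le : ∀ k, 1 ≤ k → k ≤ 2*m - 1 → ‖a k‖ ≤ 1 := by
    intro k h1 h2
    have hk : k ∈ Finset.Icc 1 (2*m-1) := Finset.mem_Icc.mpr ⟨h1, h2⟩
    have h3 := Finset.le_sup (f := fun j => Real.toNNReal (‖a j‖)) hk
    rw [hnorm] at h3
    have h4 := Real.toNNReal_le_iff_le_coe.mp h3
    simpa using h4
  obtain ⟨j₀, hj₀mem, hj₀⟩ := Finset.exists_mem_eq_sup (Finset.Icc 1 (2*m-1))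
    ⟨1, Finset.mem_Icc.mpr ⟨le_refl 1, by omega⟩⟩
    (fun j => Real.toNNReal (‖a j‖))
  rw [hnorm] at hj₀
  have haj₀ : ‖a j₀‖ = 1 := by
    have h5 := congrArg (fun x : ℝ≥0 => (x:ℝ)) hj₀
    simpa [Real.coe_toNNReal _ (norm_nonneg _)] using h5.symm
  have hj₀' : 1 ≤ j₀ ∧ j₀ ≤ 2*m - 1 := Finset.mem_Icc.mp hj₀mem
  have hsupn : ∀ n, ((coeffPairs m).sup fun jq =>
      Real.toNNReal (‖scaledCoeff m a H (η n) (τn n) jq.1 jq.2‖)) = 1 := by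
    intro n
    have h6 := (hτ n).2
    unfold HscaledNorm at h6
    exact_mod_cast h6
  have hcle : ∀ n, ∀ jq ∈ coeffPairs m,
      ‖scaledCoeff m a H (η n) (τn n) jq.1 jq.2‖ ≤ 1 := by
    intro n jq hjq
    have h1 := Finset.le_sup (f := fun jq =>
      Real.toNNReal (‖scaledCoeff m a H (η n) (τn n) jq.1 jq.2‖)) hjq
    rw [hsupn n] at h1
    have h2 := Real.toNNReal_le_iff_le_coe.mp h1
    simpa using h2
  have hτle : ∀ n, τn n ^ (2*m) ≤ epsAt H (η n) := by
    intro n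
    have hmem : ((2*m - j₀, j₀) : ℕ × ℕ) ∈ coeffPairs m := by
      unfold coeffPairs
      simp only [Finset.mem_filter, Finset.mem_product, Finset.mem_Icc]
      omega
    have htc := topCoeff m a H (η n) (τn n) (hεpos n).ne' (2*m - j₀) j₀
      (by omega) (by omega) (by omega)
    have h2mj : 2*m - (2*m - j₀) = j₀ := by omega
    rw [h2mj] at htc
    have hcle1 := hcle n _ hmem
    have habs : ‖scaledCoeff m a H (η n) (τn n) (2*m-j₀) j₀‖
        = τn n ^ (2*m) / epsAt H (η n) := by
      rw [htc, norm_mul, haj₀, one_mul, norm_div, norm_pow, Complex.norm_real, Real.norm_eq_abs,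
        Complex.norm_real, Real.norm_eq_abs, abs_of_pos (hτ n).1, abs_of_pos (hεpos n)]
    rw [habs] at hcle1
    exact (div_le_one (hεpos n)).mp hcle1
  have hlow : ∀ j q : ℕ, 1 ≤ j → 1 ≤ q → j + q < 2*m →
      Filter.Tendsto (fun n => scaledCoeff m a H (η n) (τn n) j q)
        Filter.atTop (𝓝 0) := by
    intro j q hj hq hlt
    set C : ℝ := ∑ k ∈ (Finset.Icc j (2*m-1)).filter (fun k => q ≤ 2*m - k),
        ((k.descFactorial j : ℝ) * ((2*m-k).descFactorial q : ℝ)) with hC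
    have hC0 : 0 ≤ C := Finset.sum_nonneg fun k _ => by positivity
    set e : ℕ := 2*m - j - q with he
    have hee : e ≠ 0 := by omega
    have key : ∀ n, ‖scaledCoeff m a H (η n) (τn n) j q‖ ^ (2*m)
        ≤ C ^ (2*m) * (‖(η n).1‖ ^ (2*m) / epsAt H (η n)) ^ e := by
      intro n
      have hεn := hεpos n
      have hτn := (hτ n).1
      have habs : ‖scaledCoeff m a H (η n) (τn n) j q‖
          = ‖Hmix m a j q (η n).1‖ * τn n ^ (j+q)
            / ((j.factorial : ℝ) * (q.factorial : ℝ) * epsAt H (η n)) := by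
        unfold scaledCoeff
        rw [norm_div, norm_mul, norm_mul, norm_mul, norm_pow, Complex.norm_real, Real.norm_eq_abs,
          Complex.norm_natCast, Complex.norm_natCast, Complex.norm_real, Real.norm_eq_abs,
          abs_of_pos hτn, abs_of_pos hεn]
      have hf1 : (1:ℝ) ≤ (j.factorial : ℝ) := by exact_mod_cast Nat.factorial_pos j
      have hf2 : (1:ℝ) ≤ (q.factorial : ℝ) := by exact_mod_cast Nat.factorial_pos q
      have step1 : ‖scaledCoeff m a H (η n) (τn n) j q‖
          ≤ C * ‖(η n).1‖ ^ e * τn n ^ (j+q) / epsAt H (η n) := by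
        rw [habs]
        apply div_le_div₀ (by positivity) ?_ hεn ?_
        · exact mul_le_mul_of_nonneg_right (Hmix_bound m a ha_le j q hj (η n).1)
            (by positivity)
        · have h12 : (1:ℝ) ≤ (j.factorial:ℝ) * (q.factorial:ℝ) := by nlinarith
          exact le_mul_of_one_le_left hεn.le h12
      refine le_trans (pow_le_pow_left₀ (norm_nonneg _) step1 (2*m)) ?_
      exact aux_ineq C (‖(η n).1‖) (τn n) (epsAt H (η n)) hC0
        (norm_nonneg _) hτn.le hεn (j+q) e (2*m) (by omega) (hτle n)
    have hb : Filter.Tendsto (fun n => C^(2*m) *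
        (‖(η n).1‖ ^ (2*m) / epsAt H (η n)) ^ e) Filter.atTop (𝓝 0) := by
      have h := (hratio.pow e).const_mul (C^(2*m))
      simpa [zero_pow hee] using h
    have hA : Filter.Tendsto (fun n =>
        ‖scaledCoeff m a H (η n) (τn n) j q‖) Filter.atTop (𝓝 0) := by
      apply aux_pow_root _ (2*m) (by omega) (fun n => norm_nonneg _)
      exact squeeze_zero (fun n => by positivity) key hb
    rw [tendsto_zero_iff_norm_tendsto_zero]
    simpa using hA
  refine ⟨hlow, ?_⟩
  intro cc hcc
  have hevlow : ∀ᶠ n in Filter.atTop,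
      ∀ jq ∈ (coeffPairs m).filter (fun p => p.1 + p.2 < 2*m),
      ‖scaledCoeff m a H (η n) (τn n) jq.1 jq.2‖ < 1 := by
    rw [Filter.eventually_all_finset]
    intro jq hjq
    have hjq' : 1 ≤ jq.1 ∧ 1 ≤ jq.2 ∧ jq.1 + jq.2 < 2*m := by
      simp only [coeffPairs, Finset.mem_filter, Finset.mem_product, Finset.mem_Icc] at hjq
      omega
    have h := hlow jq.1 jq.2 hjq'.1 hjq'.2.1 hjq'.2.2
    have h2 : Filter.Tendsto (fun n =>
        ‖scaledCoeff m a H (η n) (τn n) jq.1 jq.2‖) Filter.atTop (𝓝 0) := by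
      simpa using h.norm
    exact h2.eventually_lt_const one_pos
  have hone : ∀ᶠ n in Filter.atTop, τn n ^ (2*m) / epsAt H (η n) = 1 := by
    filter_upwards [hevlow] with n hn
    obtain ⟨p, hpmem, hpeq⟩ := Finset.exists_mem_eq_sup (coeffPairs m)
      ⟨(1, 1), by
        unfold coeffPairs
        simp only [Finset.mem_filter, Finset.mem_product, Finset.mem_Icc]
        omega⟩
      (fun jq => Real.toNNReal (‖scaledCoeff m a H (η n) (τn n) jq.1 jq.2‖))
    rw [hsupn n] at hpeq
    have habs1 : ‖scaledCoeff m a H (η n) (τn n) p.1 p.2‖ = 1 := by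
      have h5 := congrArg (fun x : ℝ≥0 => (x:ℝ)) hpeq
      simpa [Real.coe_toNNReal _ (norm_nonneg _)] using h5.symm
    have hp' : 1 ≤ p.1 ∧ 1 ≤ p.2 ∧ p.1 + p.2 ≤ 2*m := by
      simp only [coeffPairs, Finset.mem_filter, Finset.mem_product, Finset.mem_Icc] at hpmem
      omega
    by_cases hcase : p.1 + p.2 < 2*m
    · exact absurd habs1 (ne_of_lt (hn p (Finset.mem_filter.mpr ⟨hpmem, hcase⟩)))
    · have hsum : p.1 + p.2 = 2*m := by omega
      have htc := topCoeff m a H (η n) (τn n) (hεpos n).ne' p.1 p.2 hp'.1 hp'.2.1 hsum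
      rw [htc, norm_mul, norm_div, norm_pow, Complex.norm_real, Real.norm_eq_abs,
        Complex.norm_real, Real.norm_eq_abs,
        abs_of_pos (hτ n).1, abs_of_pos (hεpos n)] at habs1
      have hle1 : ‖a (2*m - p.1)‖ ≤ 1 := ha_le _ (by omega) (by omega)
      have ht1 : τn n ^ (2*m) / epsAt H (η n) ≤ 1 := (div_le_one (hεpos n)).mpr (hτle n)
      have ht0 : 0 ≤ τn n ^ (2*m) / epsAt H (η n) :=
        div_nonneg (pow_nonneg (hτ n).1.le _) (hεpos n).le
      have hge : 1 ≤ τn n ^ (2*m) / epsAt H (η n) := by nlinarith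
      linarith
  have htopcc : ∀ j q, 1 ≤ j → 1 ≤ q → j + q = 2*m → cc j q = a (2*m - j) := by
    intro j q h1 h2 h3
    have hev : ∀ᶠ n in Filter.atTop,
        scaledCoeff m a H (η n) (τn n) j q = a (2*m - j) := by
      filter_upwards [hone] with n hn
      rw [topCoeff m a H (η n) (τn n) (hεpos n).ne' j q h1 h2 h3]
      have hr : ((τn n : ℂ)^(2*m) / ((epsAt H (η n) : ℝ):ℂ)) = 1 := by
        rw [← Complex.ofReal_pow, ← Complex.ofReal_div, hn, Complex.ofReal_one]
      rw [hr, mul_one]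
    exact tendsto_nhds_unique (hcc j q h1 h2 h3.le)
      (Filter.Tendsto.congr' (hev.mono fun _ h => h.symm) tendsto_const_nhds)
  have hcczero : ∀ j q, 1 ≤ j → 1 ≤ q → j + q < 2*m → cc j q = 0 := fun j q h1 h2 h3 =>
    tendsto_nhds_unique (hcc j q h1 h2 h3.le) (hlow j q h1 h2 h3)
  refine ⟨hcczero, htopcc, ?_⟩
  intro w
  rw [← Finset.sum_filter_add_sum_filter_not (coeffPairs m) (fun p => p.1 + p.2 = 2*m)]
  have hz : ∑ p ∈ (coeffPairs m).filter (fun p => ¬ p.1 + p.2 = 2*m),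
      cc p.1 p.2 * w ^ p.1 * (starRingEnd ℂ w) ^ p.2 = 0 := by
    apply Finset.sum_eq_zero
    intro p hp
    rw [Finset.mem_filter] at hp
    have hp' : 1 ≤ p.1 ∧ 1 ≤ p.2 ∧ p.1 + p.2 < 2*m := by
      have h7 := hp.1
      have h8 := hp.2
      simp only [coeffPairs, Finset.mem_filter, Finset.mem_product, Finset.mem_Icc] at h7
      omega
    rw [hcczero _ _ hp'.1 hp'.2.1 hp'.2.2, zero_mul, zero_mul]
  rw [hz, add_zero]
  unfold Hpoly
  refine Finset.sum_nbij' (i := fun p : ℕ × ℕ => p.1) (j := fun k => (k, 2*m - k))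
    ?_ ?_ ?_ ?_ ?_
  · intro p hp
    simp only [coeffPairs, Finset.mem_filter, Finset.mem_product, Finset.mem_Icc] at hp ⊢
    omega
  · intro k hk
    simp only [Finset.mem_Icc] at hk
    simp only [coeffPairs, Finset.mem_filter, Finset.mem_product, Finset.mem_Icc]
    omega
  · intro p hp
    simp only [coeffPairs, Finset.mem_filter, Finset.mem_product, Finset.mem_Icc] at hp
    have h11 : 2*m - p.1 = p.2 := by omega
    show (p.1, 2*m - p.1) = p
    rw [h11]
  · intro k hk
    rfl
  · intro p hp
    simp only [coeffPairs, Finset.mem_filter, Finset.mem_product, Finset.mem_Icc] at hp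
    have h9 : 1 ≤ p.1 ∧ 1 ≤ p.2 ∧ p.1 + p.2 = 2*m := by omega
    rw [htopcc p.1 p.2 h9.1 h9.2.1 h9.2.2]
    have h10 : 2*m - p.1 = p.2 := by omega
    rw [h10]

end
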